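/- The ordinal sum 𝔏₁⊕𝔏₂ of two subspace lattices 𝔏₁ ⊆ C(X₁), 𝔏₂ ⊆ C(X₂), realized in X₁⊕X₂, is reflexive if and only if both 𝔏₁ and 𝔏₂ are reflexive. -/

import Mathlib

open ContinuousLinearMap

/-- The closed linear span (join) of a family of subspaces. -/
noncomputable def cJoin {X : Type*} [NormedAddCommGroup X] [NormedSpace ℂ X]
    (S : Set (Submodule ℂ X)) : Submodule ℂ X :=
  (sSup S).topologicalClosure

/-- Join of two subspaces in the lattice of closed subspaces. -/
noncomputable def cJoin2 {X : Type*} [NormedAddCommGroup X] [NormedSpace ℂ X]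
    (M N : Submodule ℂ X) : Submodule ℂ X :=
  (M ⊔ N).topologicalClosure

/-- A subspace lattice: a complete lattice of closed subspaces containing the trivial ones. -/
def IsSubspaceLattice {X : Type*} [NormedAddCommGroup X] [NormedSpace ℂ X]
    (L : Set (Submodule ℂ X)) : Prop :=
  (∀ M ∈ L, IsClosed (M : Set X)) ∧ ⊥ ∈ L ∧ ⊤ ∈ L ∧
    ∀ S ⊆ L, cJoin S ∈ L ∧ sInf S ∈ L

/-- Alg(F): bounded operators leaving every member of F invariant. -/
def algOf {X : Type*} [NormedAddCommGroup X] [NormedSpace ℂ X]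
    (L : Set (Submodule ℂ X)) : Set (X →L[ℂ] X) :=
  {A | ∀ M ∈ L, ∀ x ∈ M, A x ∈ M}

/-- Lat(T): closed subspaces invariant under every operator in T. -/
def latOf {X : Type*} [NormedAddCommGroup X] [NormedSpace ℂ X]
    (T : Set (X →L[ℂ] X)) : Set (Submodule ℂ X) :=
  {M | IsClosed (M : Set X) ∧ ∀ A ∈ T, ∀ x ∈ M, A x ∈ M}

/-- The rank-one operator e ⊗ η : x ↦ η(x) • e. -/
noncomputable def rankOne {X : Type*} [NormedAddCommGroup X] [NormedSpace ℂ X]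
    (e : X) (η : X →L[ℂ] ℂ) : X →L[ℂ] X :=
  η.smulRight e

/-- The rank-one operators in a set of operators. -/
noncomputable def Rk1 {X : Type*} [NormedAddCommGroup X] [NormedSpace ℂ X]
    (T : Set (X →L[ℂ] X)) : Set (X →L[ℂ] X) :=
  {A ∈ T | ∃ (e : X) (η : X →L[ℂ] ℂ), e ≠ 0 ∧ η ≠ 0 ∧ A = rankOne e η}

/-- M₋ = ⋁{K ∈ L : M ⊄ K}. -/
noncomputable def mMinus {X : Type*} [NormedAddCommGroup X] [NormedSpace ℂ X]
    (L : Set (Submodule ℂ X)) (M : Submodule ℂ X) : Submodule ℂ X :=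
  cJoin {K | K ∈ L ∧ ¬ M ≤ K}

/-- M₊ = ⋀{K ∈ L : K ⊄ M}. -/
noncomputable def mPlus {X : Type*} [NormedAddCommGroup X] [NormedSpace ℂ X]
    (L : Set (Submodule ℂ X)) (M : Submodule ℂ X) : Submodule ℂ X :=
  sInf {K | K ∈ L ∧ ¬ K ≤ M}

/-- N_* = ⋀{M₋ : M ∈ L, M ⊄ N}. -/
noncomputable def nStar {X : Type*} [NormedAddCommGroup X] [NormedSpace ℂ X]
    (L : Set (Submodule ℂ X)) (N : Submodule ℂ X) : Submodule ℂ X :=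
  sInf {P | ∃ M, M ∈ L ∧ ¬ M ≤ N ∧ P = mMinus L M}

/-- The cyclic subspace [Alg(L)x]: closed linear span of the orbit of x under Alg(L). -/
noncomputable def cyclicSubspace {X : Type*} [NormedAddCommGroup X] [NormedSpace ℂ X]
    (L : Set (Submodule ℂ X)) (x : X) : Submodule ℂ X :=
  (Submodule.span ℂ ((fun A : X →L[ℂ] X => A x) '' algOf L)).topologicalClosure

/-- The pinch points of a family of subspaces. -/
def pinOf {X : Type*} [NormedAddCommGroup X] [NormedSpace ℂ X]
    (L : Set (Submodule ℂ X)) : Set (Submodule ℂ X) :=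
  {P | P ∈ L ∧ ∀ M ∈ L, M ≤ P ∨ P ≤ M}


/-- The ordinal sum of two subspace lattices, realized in the direct sum X₁ ⊕ X₂. -/
def ordinalSum {X₁ X₂ : Type*} [NormedAddCommGroup X₁] [NormedSpace ℂ X₁]
    [NormedAddCommGroup X₂] [NormedSpace ℂ X₂]
    (L₁ : Set (Submodule ℂ X₁)) (L₂ : Set (Submodule ℂ X₂)) :
    Set (Submodule ℂ (X₁ × X₂)) :=
  {M | ∃ M₁ ∈ L₁, M = M₁.prod ⊥} ∪ {M | ∃ M₂ ∈ L₂, M = (⊤ : Submodule ℂ X₁).prod M₂}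

section Aux
variable {X₁ X₂ : Type*} [NormedAddCommGroup X₁] [NormedSpace ℂ X₁]
    [NormedAddCommGroup X₂] [NormedSpace ℂ X₂]
    (L₁ : Set (Submodule ℂ X₁)) (L₂ : Set (Submodule ℂ X₂))

open ContinuousLinearMap

lemma subset_latOf_algOf {X : Type*} [NormedAddCommGroup X] [NormedSpace ℂ X]
    {L : Set (Submodule ℂ X)} (hc : ∀ M ∈ L, IsClosed (M : Set X)) :
    L ⊆ latOf (algOf L) :=
  fun M hM => ⟨hc M hM, fun A hA x hx => hA M hM x hx⟩

lemma corner_mem_algSum (C : X₂ →L[ℂ] X₁) :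
    (inl ℂ X₁ X₂).comp (C.comp (snd ℂ X₁ X₂)) ∈ algOf (ordinalSum L₁ L₂) := by
  rintro M (⟨M₁, hM₁, rfl⟩ | ⟨M₂, hM₂, rfl⟩) ⟨x, y⟩ hxy <;>
    rcases (Submodule.mem_prod).1 hxy with ⟨h1, h2⟩
  · have : y = 0 := h2
    simp [this, Submodule.mem_prod, Submodule.zero_mem]
  · simp [Submodule.mem_prod, Submodule.zero_mem]

lemma diag1_mem_algSum {A : X₁ →L[ℂ] X₁} (hA : A ∈ algOf L₁) :
    (inl ℂ X₁ X₂).comp (A.comp (fst ℂ X₁ X₂)) ∈ algOf (ordinalSum L₁ L₂) := by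
  rintro M (⟨M₁, hM₁, rfl⟩ | ⟨M₂, hM₂, rfl⟩) ⟨x, y⟩ hxy <;>
    rcases (Submodule.mem_prod).1 hxy with ⟨h1, h2⟩
  · exact (Submodule.mem_prod).2 ⟨hA M₁ hM₁ x h1, Submodule.zero_mem _⟩
  · exact (Submodule.mem_prod).2 ⟨trivial, Submodule.zero_mem _⟩

lemma diag2_mem_algSum {B : X₂ →L[ℂ] X₂} (hB : B ∈ algOf L₂) :
    (inr ℂ X₁ X₂).comp (B.comp (snd ℂ X₁ X₂)) ∈ algOf (ordinalSum L₁ L₂) := by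
  rintro M (⟨M₁, hM₁, rfl⟩ | ⟨M₂, hM₂, rfl⟩) ⟨x, y⟩ hxy <;>
    rcases (Submodule.mem_prod).1 hxy with ⟨h1, h2⟩
  · have : y = 0 := h2
    exact (Submodule.mem_prod).2 ⟨Submodule.zero_mem _, by simp [this]⟩
  · exact (Submodule.mem_prod).2 ⟨trivial, hB M₂ hM₂ y h2⟩

/-- Structure lemma. -/
lemma latAlgSum_structure {N : Submodule ℂ (X₁ × X₂)}
    (hN : N ∈ latOf (algOf (ordinalSum L₁ L₂))) :
    (∃ M₁ ∈ latOf (algOf L₁), N = M₁.prod ⊥) ∨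
      (∃ M₂ ∈ latOf (algOf L₂), N = (⊤ : Submodule ℂ X₁).prod M₂) := by
  obtain ⟨hNc, hNi⟩ := hN
  set M₁ : Submodule ℂ X₁ := N.comap ((inl ℂ X₁ X₂ : X₁ →L[ℂ] X₁ × X₂) : X₁ →ₗ[ℂ] X₁ × X₂) with hM₁def
  set M₂ : Submodule ℂ X₂ := N.comap ((inr ℂ X₁ X₂ : X₂ →L[ℂ] X₁ × X₂) : X₂ →ₗ[ℂ] X₁ × X₂) with hM₂def
  have hmem1 : ∀ x : X₁, x ∈ M₁ ↔ ((x, 0) : X₁ × X₂) ∈ N := fun x => Iff.rfl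
  have hmem2 : ∀ y : X₂, y ∈ M₂ ↔ ((0, y) : X₁ × X₂) ∈ N := fun y => Iff.rfl
  -- projections are in the algebra
  have hP₁ := diag1_mem_algSum L₁ L₂ (A := ContinuousLinearMap.id ℂ X₁)
    (fun M hM x hx => hx)
  have hP₂ := diag2_mem_algSum L₁ L₂ (B := ContinuousLinearMap.id ℂ X₂)
    (fun M hM x hx => hx)
  have hproj1 : ∀ p : X₁ × X₂, p ∈ N → ((p.1, 0) : X₁ × X₂) ∈ N := by
    intro p hp
    have := hNi _ hP₁ p hp
    simpa using this
  have hproj2 : ∀ p : X₁ × X₂, p ∈ N → ((0, p.2) : X₁ × X₂) ∈ N := by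
    intro p hp
    have := hNi _ hP₂ p hp
    simpa using this
  have hNeq : N = M₁.prod M₂ := by
    ext ⟨x, y⟩
    rw [Submodule.mem_prod]
    constructor
    · intro h
      exact ⟨(hmem1 x).2 (hproj1 _ h), (hmem2 y).2 (hproj2 _ h)⟩
    · rintro ⟨h1, h2⟩
      have : ((x, y) : X₁ × X₂) = (x, 0) + (0, y) := by simp
      rw [this]
      exact N.add_mem ((hmem1 x).1 h1) ((hmem2 y).1 h2)
  have hM₁lat : M₁ ∈ latOf (algOf L₁) := by
    refine ⟨?_, ?_⟩
    · have : (M₁ : Set X₁) = (inl ℂ X₁ X₂) ⁻¹' (N : Set (X₁ × X₂)) := rfl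
      rw [this]
      exact hNc.preimage (inl ℂ X₁ X₂).continuous
    · intro A hA x hx
      have := hNi _ (diag1_mem_algSum L₁ L₂ hA) (x, 0) ((hmem1 x).1 hx)
      rw [hmem1]
      simpa using this
  have hM₂lat : M₂ ∈ latOf (algOf L₂) := by
    refine ⟨?_, ?_⟩
    · have : (M₂ : Set X₂) = (inr ℂ X₁ X₂) ⁻¹' (N : Set (X₁ × X₂)) := rfl
      rw [this]
      exact hNc.preimage (inr ℂ X₁ X₂).continuous
    · intro B hB y hy
      have := hNi _ (diag2_mem_algSum L₁ L₂ hB) (0, y) ((hmem2 y).1 hy)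
      rw [hmem2]
      simpa using this
  by_cases hbot : M₂ = ⊥
  · left
    exact ⟨M₁, hM₁lat, by rw [hNeq, hbot]⟩
  · right
    refine ⟨M₂, hM₂lat, ?_⟩
    have hM₁top : M₁ = ⊤ := by
      obtain ⟨y₀, hy₀M, hy₀⟩ := Submodule.exists_mem_ne_zero_of_ne_bot hbot
      obtain ⟨η, hη1, hηy⟩ := exists_dual_vector ℂ y₀ (norm_ne_zero_iff.2 hy₀)
      rw [Submodule.eq_top_iff']
      intro x
      have hC := hNi _ (corner_mem_algSum L₁ L₂ (η.smulRight x)) (0, y₀)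
        ((hmem2 y₀).1 hy₀M)
      have hval : ((η y₀ • x, 0) : X₁ × X₂) ∈ N := by simpa using hC
      have hmem : η y₀ • x ∈ M₁ := (hmem1 _).2 hval
      have hne : η y₀ ≠ 0 := by
        rw [hηy]
        exact Complex.ofReal_ne_zero.mpr (norm_ne_zero_iff.2 hy₀)
      have := M₁.smul_mem (η y₀)⁻¹ hmem
      rwa [inv_smul_smul₀ hne] at this
    rw [hNeq, hM₁top]

/-- Embedding lemma 1. -/
lemma prod_bot_mem_latAlgSum (hT : (⊤ : Submodule ℂ X₁) ∈ L₁)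
    {M₁ : Submodule ℂ X₁} (hM₁ : M₁ ∈ latOf (algOf L₁)) :
    M₁.prod ⊥ ∈ latOf (algOf (ordinalSum L₁ L₂)) := by
  refine ⟨?_, ?_⟩
  · have : (↑(M₁.prod (⊥ : Submodule ℂ X₂)) : Set (X₁ × X₂)) =
        (M₁ : Set X₁) ×ˢ ({0} : Set X₂) := by
      ext ⟨x, y⟩; simp [Submodule.mem_prod]
    rw [this]
    exact hM₁.1.prod isClosed_singleton
  · rintro A hA ⟨x, y⟩ hxy
    rcases (Submodule.mem_prod).1 hxy with ⟨h1, h2⟩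
    have hy : y = 0 := h2
    subst hy
    -- A (x,0) lands in ⊤ × ⊥
    have htopbot : A (x, 0) ∈ (⊤ : Submodule ℂ X₁).prod (⊥ : Submodule ℂ X₂) :=
      hA _ (Or.inl ⟨⊤, hT, rfl⟩) (x, 0) (by simp [Submodule.mem_prod])
    have hsnd : (A (x, 0)).2 = 0 := ((Submodule.mem_prod).1 htopbot).2
    -- compression A₁₁
    set A₁₁ : X₁ →L[ℂ] X₁ := (fst ℂ X₁ X₂).comp (A.comp (inl ℂ X₁ X₂)) with hA₁₁
    have hA₁₁alg : A₁₁ ∈ algOf L₁ := by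
      intro K hK z hz
      have := hA _ (Or.inl ⟨K, hK, rfl⟩) (z, 0)
        ((Submodule.mem_prod).2 ⟨hz, Submodule.zero_mem _⟩)
      exact ((Submodule.mem_prod).1 this).1
    have hfst : (A (x, 0)).1 ∈ M₁ := hM₁.2 A₁₁ hA₁₁alg x h1
    exact (Submodule.mem_prod).2 ⟨hfst, hsnd⟩

/-- Embedding lemma 2. -/
lemma top_prod_mem_latAlgSum (hT : (⊤ : Submodule ℂ X₁) ∈ L₁)
    {M₂ : Submodule ℂ X₂} (hM₂ : M₂ ∈ latOf (algOf L₂)) :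
    (⊤ : Submodule ℂ X₁).prod M₂ ∈ latOf (algOf (ordinalSum L₁ L₂)) := by
  refine ⟨?_, ?_⟩
  · have : (↑((⊤ : Submodule ℂ X₁).prod M₂) : Set (X₁ × X₂)) =
        (Set.univ : Set X₁) ×ˢ (M₂ : Set X₂) := by
      ext ⟨x, y⟩; simp [Submodule.mem_prod]
    rw [this]
    exact isClosed_univ.prod hM₂.1
  · rintro A hA ⟨x, y⟩ hxy
    rcases (Submodule.mem_prod).1 hxy with ⟨h1, h2⟩
    have hsplit : ((x, y) : X₁ × X₂) = (x, 0) + (0, y) := by simp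
    have htopbot : A (x, 0) ∈ (⊤ : Submodule ℂ X₁).prod (⊥ : Submodule ℂ X₂) :=
      hA _ (Or.inl ⟨⊤, hT, rfl⟩) (x, 0) (by simp [Submodule.mem_prod])
    have hsnd0 : (A (x, 0)).2 = 0 := ((Submodule.mem_prod).1 htopbot).2
    set A₂₂ : X₂ →L[ℂ] X₂ := (snd ℂ X₁ X₂).comp (A.comp (inr ℂ X₁ X₂)) with hA₂₂
    have hA₂₂alg : A₂₂ ∈ algOf L₂ := by
      intro K hK z hz
      have := hA _ (Or.inr ⟨K, hK, rfl⟩) (0, z)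
        ((Submodule.mem_prod).2 ⟨trivial, hz⟩)
      exact ((Submodule.mem_prod).1 this).2
    have hsnd2 : (A (0, y)).2 ∈ M₂ := hM₂.2 A₂₂ hA₂₂alg y h2
    refine (Submodule.mem_prod).2 ⟨trivial, ?_⟩
    rw [hsplit, map_add]
    show (A (x, 0)).2 + (A (0, y)).2 ∈ M₂
    rw [hsnd0, zero_add]
    exact hsnd2

end Aux

/-- The ordinal sum of two subspace lattices is reflexive iff both summands are reflexive. -/
theorem ordinalSum_reflexive_iff
    {X₁ X₂ : Type*} [NormedAddCommGroup X₁] [NormedSpace ℂ X₁] [CompleteSpace X₁]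
    [NormedAddCommGroup X₂] [NormedSpace ℂ X₂] [CompleteSpace X₂]
    (L₁ : Set (Submodule ℂ X₁)) (hL₁ : IsSubspaceLattice L₁)
    (L₂ : Set (Submodule ℂ X₂)) (hL₂ : IsSubspaceLattice L₂) :
    latOf (algOf (ordinalSum L₁ L₂)) = ordinalSum L₁ L₂ ↔
      (latOf (algOf L₁) = L₁ ∧ latOf (algOf L₂) = L₂) := by
  obtain ⟨hc₁, hbot₁, htop₁, -⟩ := hL₁
  obtain ⟨hc₂, hbot₂, htop₂, -⟩ := hL₂
  constructor
  · intro h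
    constructor
    · apply Set.Subset.antisymm
      · intro M₁ hM₁
        have hmem : M₁.prod ⊥ ∈ ordinalSum L₁ L₂ := by
          rw [← h]; exact prod_bot_mem_latAlgSum L₁ L₂ htop₁ hM₁
        rcases hmem with ⟨N₁, hN₁, heq⟩ | ⟨N₂, hN₂, heq⟩
        · have hMN : M₁ = N₁ := by
            ext x
            have h1 : x ∈ M₁ ↔ ((x, (0 : X₂)) : X₁ × X₂) ∈ M₁.prod (⊥ : Submodule ℂ X₂) := by
              simp [Submodule.mem_prod]
            rw [h1, heq]; simp [Submodule.mem_prod]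
          rw [hMN]; exact hN₁
        · have hMtop : M₁ = ⊤ := by
            rw [Submodule.eq_top_iff']; intro x
            have hx : ((x, (0 : X₂)) : X₁ × X₂) ∈ (⊤ : Submodule ℂ X₁).prod N₂ := by
              simp [Submodule.mem_prod]
            rw [← heq] at hx
            exact ((Submodule.mem_prod).1 hx).1
          rw [hMtop]; exact htop₁
      · exact subset_latOf_algOf hc₁
    · apply Set.Subset.antisymm
      · intro M₂ hM₂
        have hmem : (⊤ : Submodule ℂ X₁).prod M₂ ∈ ordinalSum L₁ L₂ := by
          rw [← h]; exact top_prod_mem_latAlgSum L₁ L₂ htop₁ hM₂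
        rcases hmem with ⟨N₁, hN₁, heq⟩ | ⟨N₂, hN₂, heq⟩
        · have hMbot : M₂ = ⊥ := by
            rw [Submodule.eq_bot_iff]; intro y hy
            have hy' : (((0 : X₁), y) : X₁ × X₂) ∈ (⊤ : Submodule ℂ X₁).prod M₂ := by
              simp [Submodule.mem_prod, hy]
            rw [heq] at hy'
            exact ((Submodule.mem_prod).1 hy').2
          rw [hMbot]; exact hbot₂
        · have hMN : M₂ = N₂ := by
            ext y
            have h1 : y ∈ M₂ ↔ (((0 : X₁), y) : X₁ × X₂) ∈ (⊤ : Submodule ℂ X₁).prod M₂ := by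
              simp [Submodule.mem_prod]
            rw [h1, heq]; simp [Submodule.mem_prod]
          rw [hMN]; exact hN₂
      · exact subset_latOf_algOf hc₂
  · rintro ⟨h₁, h₂⟩
    apply Set.Subset.antisymm
    · intro N hN
      rcases latAlgSum_structure L₁ L₂ hN with ⟨M₁, hM₁, rfl⟩ | ⟨M₂, hM₂, rfl⟩
      · exact Or.inl ⟨M₁, h₁ ▸ hM₁, rfl⟩
      · exact Or.inr ⟨M₂, h₂ ▸ hM₂, rfl⟩
    · apply subset_latOf_algOf
      rintro M (⟨M₁, hM₁, rfl⟩ | ⟨M₂, hM₂, rfl⟩)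
      · have hset : (↑(M₁.prod (⊥ : Submodule ℂ X₂)) : Set (X₁ × X₂)) =
            (M₁ : Set X₁) ×ˢ ({0} : Set X₂) := by
          ext ⟨x, y⟩; simp [Submodule.mem_prod]
        rw [hset]
        exact (hc₁ M₁ hM₁).prod isClosed_singleton
      · have hset : (↑((⊤ : Submodule ℂ X₁).prod M₂) : Set (X₁ × X₂)) =
            (Set.univ : Set X₁) ×ˢ (M₂ : Set X₂) := by
          ext ⟨x, y⟩; simp [Submodule.mem_prod]
        rw [hset]
        exact isClosed_univ.prod (hc₂ M₂ hM₂)
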